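/- Assume the positivity condition θ_k ∈ (0,π) for all 1 ≤ k ≤ N, ∑_{k=1}^N θ_k = 2π, and N ≥ 5. If sin(φ_k − φ_j) ≠ 0 for all 1 ≤ j < k ≤ N, then Q(λ) > 0 for every λ ∈ Δ̄ with λ ≠ 0. -/

import Mathlib

/-- The cumulative angle `φ_k = ∑_{a=1}^k θ_a`. -/
noncomputable def phiAng (θ : ℕ → ℝ) (k : ℕ) : ℝ := ∑ a ∈ Finset.Icc 1 k, θ a

/-- The signed-area quadratic form `Q` on `ℝ^{N-2}` (coordinates indexed `1,…,N-2`). -/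
noncomputable def Qform (N : ℕ) (θ : ℕ → ℝ) (lam : ℕ → ℝ) : ℝ :=
  -(1/2) * ∑ j ∈ Finset.Icc 1 (N-2),
      Real.sin (phiAng θ N - phiAng θ j) * Real.sin (phiAng θ (N-1) - phiAng θ j)
        / Real.sin (θ N) * (lam j)^2
  - ∑ j ∈ Finset.Icc 1 (N-2), ∑ k ∈ Finset.Icc (j+1) (N-2),
      Real.sin (phiAng θ N - phiAng θ j) * Real.sin (phiAng θ (N-1) - phiAng θ k)
        / Real.sin (θ N) * (lam j * lam k)

/-- The vector `v`, `v_j = -sin(φ_N - φ_j)/sin(θ_N)`. -/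
noncomputable def vvec (N : ℕ) (θ : ℕ → ℝ) (j : ℕ) : ℝ :=
  -(Real.sin (phiAng θ N - phiAng θ j)) / Real.sin (θ N)

/-- The vector `w`, `w_j = sin(φ_{N-1} - φ_j)/sin(θ_N)`. -/
noncomputable def wvec (N : ℕ) (θ : ℕ → ℝ) (j : ℕ) : ℝ :=
  Real.sin (phiAng θ (N-1) - phiAng θ j) / Real.sin (θ N)

/-- The extended side lengths: `λ_k` for `k ≤ N-2`, `λ_{N-1} = vᵀλ`, `λ_N = wᵀλ`. -/
noncomputable def lamExt (N : ℕ) (θ : ℕ → ℝ) (lam : ℕ → ℝ) (k : ℕ) : ℝ :=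
  if k = N - 1 then ∑ j ∈ Finset.Icc 1 (N-2), vvec N θ j * lam j
  else if k = N then ∑ j ∈ Finset.Icc 1 (N-2), wvec N θ j * lam j
  else lam k

/-- Vectors in `ℝ^{N-2}` modelled as functions `ℕ → ℝ` supported on `{1,…,N-2}`. -/
def suppOK (N : ℕ) (lam : ℕ → ℝ) : Prop := ∀ k, k ∉ Finset.Icc 1 (N-2) → lam k = 0

/-- The closed double cone `Δ̄` of vectors with all extended coordinates `≥ 0` or all `≤ 0`. -/
def DeltaBar (N : ℕ) (θ : ℕ → ℝ) : Set (ℕ → ℝ) :=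
  {lam | suppOK N lam ∧
    ((∀ k, 1 ≤ k → k ≤ N → 0 ≤ lamExt N θ lam k) ∨
     (∀ k, 1 ≤ k → k ≤ N → lamExt N θ lam k ≤ 0))}

/-- The isotropic set `D_0 = {λ : Q(λ) = 0}`. -/
def Dzero (N : ℕ) (θ : ℕ → ℝ) : Set (ℕ → ℝ) := {lam | suppOK N lam ∧ Qform N θ lam = 0}

/-- The coordinate subspace `V_I = {λ : λ_j = 0 for j ∈ I}`. -/
def Vface (N : ℕ) (θ : ℕ → ℝ) (I : Finset ℕ) : Set (ℕ → ℝ) :=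
  {lam | suppOK N lam ∧ ∀ j ∈ I, lamExt N θ lam j = 0}

/-- The face `F_I = V_I ∩ Δ̄`. -/
def Fface (N : ℕ) (θ : ℕ → ℝ) (I : Finset ℕ) : Set (ℕ → ℝ) := Vface N θ I ∩ DeltaBar N θ


section AuxProof
open Finset Real


lemma phi_diff (θ : ℕ → ℝ) {j k : ℕ} (h : j ≤ k) :
    phiAng θ k - phiAng θ j = ∑ a ∈ Ioc j k, θ a := by
  have h0 : phiAng θ j + ∑ a ∈ Ioc j k, θ a = phiAng θ k := by
    unfold phiAng
    rw [show Finset.Icc 1 j = Ioc 0 j from Finset.Icc_add_one_left_eq_Ioc 0 j,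
        show Finset.Icc 1 k = Ioc 0 k from Finset.Icc_add_one_left_eq_Ioc 0 k]
    exact Finset.sum_Ioc_consecutive _ (Nat.zero_le j) h
  linarith

lemma phi_mono (N : ℕ) (θ : ℕ → ℝ) (hθ : ∀ k, 1 ≤ k → k ≤ N → 0 < θ k)
    {j k : ℕ} (hjk : j < k) (hk : k ≤ N) : phiAng θ j < phiAng θ k := by
  have := phi_diff θ (le_of_lt hjk)
  have hpos : 0 < ∑ a ∈ Ioc j k, θ a := by
    apply Finset.sum_pos
    · intro a ha
      simp only [Finset.mem_Ioc] at ha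
      exact hθ a (by omega) (by omega)
    · exact ⟨k, by simp [Finset.mem_Ioc, hjk]⟩
  linarith

lemma lamExt_mid (n : ℕ) (θ lam : ℕ → ℝ) {j : ℕ} (hj : j ∈ Icc 1 n) :
    lamExt (n+2) θ lam j = lam j := by
  simp only [Finset.mem_Icc] at hj
  simp only [lamExt, if_neg (by omega : ¬ j = n+2-1), if_neg (by omega : ¬ j = n+2)]

lemma lamExt_top1 (n : ℕ) (θ lam : ℕ → ℝ) :
    lamExt (n+2) θ lam (n+1) = ∑ j ∈ Icc 1 n, vvec (n+2) θ j * lam j := by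
  simp only [lamExt, if_pos (by omega : n+1 = n+2-1)]
  norm_num

lemma lamExt_top2 (n : ℕ) (θ lam : ℕ → ℝ) :
    lamExt (n+2) θ lam (n+2) = ∑ j ∈ Icc 1 n, wvec (n+2) θ j * lam j := by
  simp only [lamExt, if_neg (by omega : ¬ n+2 = n+2-1), if_pos rfl]
  norm_num



lemma sq_split (n : ℕ) (f : ℕ → ℕ → ℝ) :
    ∑ j ∈ Icc 1 n, ∑ k ∈ Icc 1 n, f j k
      = (∑ j ∈ Icc 1 n, f j j) + ∑ j ∈ Icc 1 n, ∑ k ∈ Icc (j+1) n, (f j k + f k j) := by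
  induction n with
  | zero => simp
  | succ n ih =>
    have h1 : ∀ g : ℕ → ℝ, (∑ k ∈ Icc 1 (n+1), g k) = (∑ k ∈ Icc 1 n, g k) + g (n+1) :=
      fun g => Finset.sum_Icc_succ_top (by omega) g
    have h2 : ∀ j ∈ Icc 1 n, (∑ k ∈ Icc (j+1) (n+1), (f j k + f k j))
        = (∑ k ∈ Icc (j+1) n, (f j k + f k j)) + (f j (n+1) + f (n+1) j) := by
      intro j hj
      exact Finset.sum_Icc_succ_top (by simp at hj; omega) _
    have h3 : ∀ j ∈ Icc 1 n, (∑ k ∈ Icc 1 (n+1), f j k)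
        = (∑ k ∈ Icc 1 n, f j k) + f j (n+1) := fun j _ => h1 _
    rw [h1, h1, Finset.sum_congr rfl h3,
      h1 (fun j => ∑ k ∈ Icc (j+1) (n+1), (f j k + f k j)), Finset.sum_congr rfl h2,
      Finset.sum_add_distrib, Finset.sum_add_distrib, Finset.sum_add_distrib, ih]
    have he : Icc (n+1+1) (n+1) = (∅ : Finset ℕ) := by
      apply Finset.Icc_eq_empty; omega
    rw [he, h1 (fun j => f j j)]
    simp
    ring


lemma closureX (n : ℕ) (θ lam : ℕ → ℝ) (hsin : Real.sin (θ (n+2)) ≠ 0)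
    (ht : phiAng θ (n+2) = phiAng θ (n+1) + θ (n+2)) :
    ∑ a ∈ Icc 1 (n+2), lamExt (n+2) θ lam a * Real.cos (phiAng θ a) = 0 := by
  have hs2 : Real.sin (θ (n+2)) = Real.sin (phiAng θ (n+2) - phiAng θ (n+1)) := by
    rw [ht]; congr 1; ring
  have hsin' : Real.sin (phiAng θ (n+2) - phiAng θ (n+1)) ≠ 0 := hs2 ▸ hsin
  rw [show ((n:ℕ)+2) = (n+1)+1 from rfl, Finset.sum_Icc_succ_top (by omega),
      Finset.sum_Icc_succ_top (by omega), lamExt_top1, lamExt_top2,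
      Finset.sum_congr rfl (fun j hj => by rw [lamExt_mid n θ lam hj]),
      Finset.sum_mul, Finset.sum_mul, ← Finset.sum_add_distrib, ← Finset.sum_add_distrib]
  apply Finset.sum_eq_zero
  intro j hj
  simp only [vvec, wvec, hs2, show (n:ℕ)+1+1 = n+2 from rfl, show (n:ℕ)+2-1 = n+1 from rfl]
  field_simp
  simp only [Real.sin_sub, Real.cos_sub]
  ring

lemma closureY (n : ℕ) (θ lam : ℕ → ℝ) (hsin : Real.sin (θ (n+2)) ≠ 0)
    (ht : phiAng θ (n+2) = phiAng θ (n+1) + θ (n+2)) :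
    ∑ a ∈ Icc 1 (n+2), lamExt (n+2) θ lam a * Real.sin (phiAng θ a) = 0 := by
  have hs2 : Real.sin (θ (n+2)) = Real.sin (phiAng θ (n+2) - phiAng θ (n+1)) := by
    rw [ht]; congr 1; ring
  have hsin' : Real.sin (phiAng θ (n+2) - phiAng θ (n+1)) ≠ 0 := hs2 ▸ hsin
  rw [show ((n:ℕ)+2) = (n+1)+1 from rfl, Finset.sum_Icc_succ_top (by omega),
      Finset.sum_Icc_succ_top (by omega), lamExt_top1, lamExt_top2,
      Finset.sum_congr rfl (fun j hj => by rw [lamExt_mid n θ lam hj]),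
      Finset.sum_mul, Finset.sum_mul, ← Finset.sum_add_distrib, ← Finset.sum_add_distrib]
  apply Finset.sum_eq_zero
  intro j hj
  simp only [vvec, wvec, hs2, show (n:ℕ)+1+1 = n+2 from rfl, show (n:ℕ)+2-1 = n+1 from rfl]
  field_simp
  simp only [Real.sin_sub, Real.cos_sub]
  ring

lemma Qeq (n : ℕ) (θ lam : ℕ → ℝ) (hsin : Real.sin (θ (n+2)) ≠ 0)
    (ht : phiAng θ (n+2) = phiAng θ (n+1) + θ (n+2)) :
    Qform (n+2) θ lam = (1/2) * ∑ j ∈ Icc 1 (n+2), lamExt (n+2) θ lam j *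
      ∑ k ∈ Icc (j+1) (n+2), lamExt (n+2) θ lam k * Real.sin (phiAng θ k - phiAng θ j) := by
  have hs2 : Real.sin (θ (n+2)) = Real.sin (phiAng θ (n+2) - phiAng θ (n+1)) := by
    rw [ht]; congr 1; ring
  have hsin' : Real.sin (phiAng θ (n+2) - phiAng θ (n+1)) ≠ 0 := hs2 ▸ hsin
  have inner_j : ∀ j ∈ Icc 1 n, (lamExt (n+2) θ lam j *
      ∑ k ∈ Icc (j+1) (n+2), lamExt (n+2) θ lam k * Real.sin (phiAng θ k - phiAng θ j))
      = lam j * ∑ k ∈ Icc (j+1) n, lam k * Real.sin (phiAng θ k - phiAng θ j)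
        + lam j * Real.sin (phiAng θ (n+1) - phiAng θ j) * (∑ i ∈ Icc 1 n, vvec (n+2) θ i * lam i)
        + lam j * Real.sin (phiAng θ (n+2) - phiAng θ j) * (∑ i ∈ Icc 1 n, wvec (n+2) θ i * lam i) := by
    intro j hj
    have hj1 : (1:ℕ) ≤ j ∧ j ≤ n := by simpa using hj
    rw [lamExt_mid n θ lam hj,
      show ((n:ℕ)+2) = (n+1)+1 from rfl, Finset.sum_Icc_succ_top (by omega),
      Finset.sum_Icc_succ_top (by omega), lamExt_top1, lamExt_top2,
      Finset.sum_congr rfl (fun k hk => by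
        rw [lamExt_mid n θ lam (by simp only [Finset.mem_Icc] at hk ⊢; omega)])]
    ring
  have step1 : ∑ j ∈ Icc 1 (n+2), lamExt (n+2) θ lam j *
      ∑ k ∈ Icc (j+1) (n+2), lamExt (n+2) θ lam k * Real.sin (phiAng θ k - phiAng θ j)
      = (∑ j ∈ Icc 1 n, (lam j * ∑ k ∈ Icc (j+1) n, lam k * Real.sin (phiAng θ k - phiAng θ j)
          + lam j * Real.sin (phiAng θ (n+1) - phiAng θ j) * (∑ i ∈ Icc 1 n, vvec (n+2) θ i * lam i)
          + lam j * Real.sin (phiAng θ (n+2) - phiAng θ j) * (∑ i ∈ Icc 1 n, wvec (n+2) θ i * lam i)))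
        + (∑ i ∈ Icc 1 n, vvec (n+2) θ i * lam i) * (∑ i ∈ Icc 1 n, wvec (n+2) θ i * lam i)
            * Real.sin (phiAng θ (n+2) - phiAng θ (n+1)) := by
    rw [show ((n:ℕ)+2) = (n+1)+1 from rfl, Finset.sum_Icc_succ_top (by omega),
        Finset.sum_Icc_succ_top (by omega), Finset.sum_congr rfl inner_j, lamExt_top1, lamExt_top2]
    rw [show Icc ((n:ℕ)+1+1) (n+1+1) = {n+1+1} from Finset.Icc_self _,
        show Icc ((n:ℕ)+1+1+1) (n+1+1) = ∅ from Finset.Icc_eq_empty (by omega)]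
    rw [Finset.sum_singleton, Finset.sum_empty, lamExt_top2]
    ring
  have hsplit : ∑ j ∈ Icc 1 n, (lam j * ∑ k ∈ Icc (j+1) n, lam k * Real.sin (phiAng θ k - phiAng θ j)
          + lam j * Real.sin (phiAng θ (n+1) - phiAng θ j) * (∑ i ∈ Icc 1 n, vvec (n+2) θ i * lam i)
          + lam j * Real.sin (phiAng θ (n+2) - phiAng θ j) * (∑ i ∈ Icc 1 n, wvec (n+2) θ i * lam i))
      = (∑ j ∈ Icc 1 n, lam j * ∑ k ∈ Icc (j+1) n, lam k * Real.sin (phiAng θ k - phiAng θ j))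
        + (∑ j ∈ Icc 1 n, lam j * Real.sin (phiAng θ (n+1) - phiAng θ j) * (∑ i ∈ Icc 1 n, vvec (n+2) θ i * lam i))
        + (∑ j ∈ Icc 1 n, lam j * Real.sin (phiAng θ (n+2) - phiAng θ j) * (∑ i ∈ Icc 1 n, wvec (n+2) θ i * lam i)) := by
    rw [Finset.sum_add_distrib, Finset.sum_add_distrib]
  have step2 : ∑ j ∈ Icc 1 n, lam j * Real.sin (phiAng θ (n+2) - phiAng θ j) * (∑ i ∈ Icc 1 n, wvec (n+2) θ i * lam i)
      = -((∑ i ∈ Icc 1 n, vvec (n+2) θ i * lam i) * (∑ i ∈ Icc 1 n, wvec (n+2) θ i * lam i)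
            * Real.sin (phiAng θ (n+2) - phiAng θ (n+1))) := by
    have hpt : ∀ j ∈ Icc 1 n, lam j * Real.sin (phiAng θ (n+2) - phiAng θ j) * (∑ i ∈ Icc 1 n, wvec (n+2) θ i * lam i)
        = -((vvec (n+2) θ j * lam j) * ((∑ i ∈ Icc 1 n, wvec (n+2) θ i * lam i)
            * Real.sin (phiAng θ (n+2) - phiAng θ (n+1)))) := by
      intro j hj
      simp only [vvec, hs2]
      field_simp
    rw [Finset.sum_congr rfl hpt, Finset.sum_neg_distrib, ← Finset.sum_mul]
    ring
  have step3 : ∑ j ∈ Icc 1 n, lam j * Real.sin (phiAng θ (n+1) - phiAng θ j) * (∑ i ∈ Icc 1 n, vvec (n+2) θ i * lam i)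
      = (∑ j ∈ Icc 1 n, (lam j * Real.sin (phiAng θ (n+1) - phiAng θ j)) * (vvec (n+2) θ j * lam j))
        + ∑ j ∈ Icc 1 n, ∑ k ∈ Icc (j+1) n,
            ((lam j * Real.sin (phiAng θ (n+1) - phiAng θ j)) * (vvec (n+2) θ k * lam k)
              + (lam k * Real.sin (phiAng θ (n+1) - phiAng θ k)) * (vvec (n+2) θ j * lam j)) := by
    rw [show ∀ x:ℝ, (∑ j ∈ Icc 1 n, lam j * Real.sin (phiAng θ (n+1) - phiAng θ j) * x) =
        (∑ j ∈ Icc 1 n, lam j * Real.sin (phiAng θ (n+1) - phiAng θ j)) * x from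
          fun x => (Finset.sum_mul _ _ _).symm,
      Finset.sum_mul_sum, sq_split n (fun j k => (lam j * Real.sin (phiAng θ (n+1) - phiAng θ j)) * (vvec (n+2) θ k * lam k))]
  -- now pointwise identification with Qform
  have ptdiag : ∀ j ∈ Icc 1 n, (lam j * Real.sin (phiAng θ (n+1) - phiAng θ j)) * (vvec (n+2) θ j * lam j)
      = -(Real.sin (phiAng θ (n+2) - phiAng θ j) * Real.sin (phiAng θ (n+1) - phiAng θ j)
          / Real.sin (θ (n+2)) * (lam j)^2) := by
    intro j hj
    simp only [vvec]
    ring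
  have ptoff : ∀ j ∈ Icc 1 n, ∀ k ∈ Icc (j+1) n,
      lam j * (lam k * Real.sin (phiAng θ k - phiAng θ j))
        + ((lam j * Real.sin (phiAng θ (n+1) - phiAng θ j)) * (vvec (n+2) θ k * lam k)
          + (lam k * Real.sin (phiAng θ (n+1) - phiAng θ k)) * (vvec (n+2) θ j * lam j))
      = -(2 * (Real.sin (phiAng θ (n+2) - phiAng θ j) * Real.sin (phiAng θ (n+1) - phiAng θ k)
          / Real.sin (θ (n+2)) * (lam j * lam k))) := by
    intro j hj k hk
    simp only [vvec, hs2]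
    field_simp
    simp only [Real.sin_sub]
    ring
  have hA : ∀ j ∈ Icc 1 n, lam j * ∑ k ∈ Icc (j+1) n, lam k * Real.sin (phiAng θ k - phiAng θ j)
      = ∑ k ∈ Icc (j+1) n, lam j * (lam k * Real.sin (phiAng θ k - phiAng θ j)) :=
    fun j _ => Finset.mul_sum _ _ _
  have final : ∑ j ∈ Icc 1 (n+2), lamExt (n+2) θ lam j *
      ∑ k ∈ Icc (j+1) (n+2), lamExt (n+2) θ lam k * Real.sin (phiAng θ k - phiAng θ j)
      = (∑ j ∈ Icc 1 n, (lam j * Real.sin (phiAng θ (n+1) - phiAng θ j)) * (vvec (n+2) θ j * lam j))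
        + ((∑ j ∈ Icc 1 n, lam j * ∑ k ∈ Icc (j+1) n, lam k * Real.sin (phiAng θ k - phiAng θ j))
          + ∑ j ∈ Icc 1 n, ∑ k ∈ Icc (j+1) n,
            ((lam j * Real.sin (phiAng θ (n+1) - phiAng θ j)) * (vvec (n+2) θ k * lam k)
              + (lam k * Real.sin (phiAng θ (n+1) - phiAng θ k)) * (vvec (n+2) θ j * lam j))) := by
    rw [step1, hsplit, step2, step3]; ring
  have merge : (∑ j ∈ Icc 1 n, lam j * ∑ k ∈ Icc (j+1) n, lam k * Real.sin (phiAng θ k - phiAng θ j))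
          + ∑ j ∈ Icc 1 n, ∑ k ∈ Icc (j+1) n,
            ((lam j * Real.sin (phiAng θ (n+1) - phiAng θ j)) * (vvec (n+2) θ k * lam k)
              + (lam k * Real.sin (phiAng θ (n+1) - phiAng θ k)) * (vvec (n+2) θ j * lam j))
      = ∑ j ∈ Icc 1 n, ∑ k ∈ Icc (j+1) n,
          (lam j * (lam k * Real.sin (phiAng θ k - phiAng θ j))
            + ((lam j * Real.sin (phiAng θ (n+1) - phiAng θ j)) * (vvec (n+2) θ k * lam k)
              + (lam k * Real.sin (phiAng θ (n+1) - phiAng θ k)) * (vvec (n+2) θ j * lam j))) := by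
    rw [Finset.sum_congr rfl hA, ← Finset.sum_add_distrib]
    exact Finset.sum_congr rfl (fun j _ => (Finset.sum_add_distrib).symm)
  rw [final, merge, Finset.sum_congr rfl ptdiag,
    Finset.sum_congr rfl (fun j hj => Finset.sum_congr rfl (ptoff j hj)),
    Finset.sum_neg_distrib,
    Finset.sum_congr rfl (fun j (hj : j ∈ Icc 1 n) => Finset.sum_neg_distrib (G := ℝ) _),
    Finset.sum_neg_distrib]
  simp only [Qform, show ((n:ℕ)+2-2) = n from rfl, show ((n:ℕ)+2-1) = n+1 from rfl]
  rw [show ∑ j ∈ Icc 1 n, ∑ k ∈ Icc (j+1) n, 2 * (Real.sin (phiAng θ (n+2) - phiAng θ j) * Real.sin (phiAng θ (n+1) - phiAng θ k) / Real.sin (θ (n+2)) * (lam j * lam k))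
      = 2 * ∑ j ∈ Icc 1 n, ∑ k ∈ Icc (j+1) n, Real.sin (phiAng θ (n+2) - phiAng θ j) * Real.sin (phiAng θ (n+1) - phiAng θ k) / Real.sin (θ (n+2)) * (lam j * lam k) from by
    rw [Finset.mul_sum]
    exact Finset.sum_congr rfl (fun j _ => (Finset.mul_sum _ _ _).symm)]
  ring

lemma closureR (n : ℕ) (θ lam : ℕ → ℝ) (hsin : Real.sin (θ (n+2)) ≠ 0)
    (ht : phiAng θ (n+2) = phiAng θ (n+1) + θ (n+2)) (c : ℕ) :
    ∑ a ∈ Icc 1 (n+2), lamExt (n+2) θ lam a * Real.sin (phiAng θ a - phiAng θ c) = 0 := by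
  have h : ∀ a ∈ Icc 1 (n+2), lamExt (n+2) θ lam a * Real.sin (phiAng θ a - phiAng θ c)
      = (lamExt (n+2) θ lam a * Real.sin (phiAng θ a)) * Real.cos (phiAng θ c)
        - (lamExt (n+2) θ lam a * Real.cos (phiAng θ a)) * Real.sin (phiAng θ c) := by
    intro a _; rw [Real.sin_sub]; ring
  rw [Finset.sum_congr rfl h, Finset.sum_sub_distrib, ← Finset.sum_mul, ← Finset.sum_mul,
    closureX n θ lam hsin ht, closureY n θ lam hsin ht]
  ring

lemma closureRc (n : ℕ) (θ lam : ℕ → ℝ) (hsin : Real.sin (θ (n+2)) ≠ 0)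
    (ht : phiAng θ (n+2) = phiAng θ (n+1) + θ (n+2)) (c : ℕ) :
    ∑ a ∈ Icc 1 (n+2), lamExt (n+2) θ lam a * Real.cos (phiAng θ a - phiAng θ c) = 0 := by
  have h : ∀ a ∈ Icc 1 (n+2), lamExt (n+2) θ lam a * Real.cos (phiAng θ a - phiAng θ c)
      = (lamExt (n+2) θ lam a * Real.cos (phiAng θ a)) * Real.cos (phiAng θ c)
        + (lamExt (n+2) θ lam a * Real.sin (phiAng θ a)) * Real.sin (phiAng θ c) := by
    intro a _; rw [Real.cos_sub]; ring
  rw [Finset.sum_congr rfl h, Finset.sum_add_distrib, ← Finset.sum_mul, ← Finset.sum_mul,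
    closureX n θ lam hsin ht, closureY n θ lam hsin ht]
  ring

lemma Qform_neg (N : ℕ) (θ lam : ℕ → ℝ) : Qform N θ (-lam) = Qform N θ lam := by
  simp only [Qform, Pi.neg_apply, neg_mul_neg, neg_sq]

lemma lamExt_neg (N : ℕ) (θ lam : ℕ → ℝ) (k : ℕ) :
    lamExt N θ (-lam) k = - lamExt N θ lam k := by
  simp only [lamExt, Pi.neg_apply, mul_neg]
  split_ifs <;> simp [Finset.sum_neg_distrib]


lemma keyPos (n : ℕ) (θ : ℕ → ℝ)
    (hθ : ∀ k, 1 ≤ k → k ≤ n+2 → θ k ∈ Set.Ioo 0 Real.pi)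
    (hsum : ∑ k ∈ Finset.Icc 1 (n+2), θ k = 2 * Real.pi)
    (hpar : ∀ j k, 1 ≤ j → j < k → k ≤ n+2 → Real.sin (phiAng θ k - phiAng θ j) ≠ 0)
    (lam : ℕ → ℝ) (hsupp : suppOK (n+2) lam)
    (hpos : ∀ k, 1 ≤ k → k ≤ n+2 → 0 ≤ lamExt (n+2) θ lam k)
    (hlam : lam ≠ 0) : 0 < Qform (n+2) θ lam := by
  have hθpos : ∀ k, 1 ≤ k → k ≤ n+2 → 0 < θ k := fun k h1 h2 => (hθ k h1 h2).1
  have hsin : 0 < Real.sin (θ (n+2)) :=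
    Real.sin_pos_of_pos_of_lt_pi (hθ (n+2) (by omega) le_rfl).1 (hθ (n+2) (by omega) le_rfl).2
  have ht : phiAng θ (n+2) = phiAng θ (n+1) + θ (n+2) := by
    have h := phi_diff θ (show n+1 ≤ n+2 by omega)
    have h2 : Ioc (n+1) (n+2) = {n+2} := by
      ext x; simp only [Finset.mem_Ioc, Finset.mem_singleton]; omega
    rw [h2, Finset.sum_singleton] at h
    linarith
  have hφN : phiAng θ (n+2) = 2 * Real.pi := hsum
  have hφ0 : phiAng θ 0 = 0 := by simp [phiAng]
  have hmono : ∀ {j k : ℕ}, j < k → k ≤ n+2 → phiAng θ j < phiAng θ k :=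
    fun hjk hk => phi_mono (n+2) θ hθpos hjk hk
  have hφpos : ∀ a, 1 ≤ a → a ≤ n+2 → 0 < phiAng θ a := by
    intro a h1 h2
    have := hmono (show 0 < a by omega) h2
    rw [hφ0] at this; exact this
  have hφle : ∀ a, a ≤ n+2 → phiAng θ a ≤ 2 * Real.pi := by
    intro a ha
    rcases eq_or_lt_of_le ha with h | h
    · rw [h, hφN]
    · have := hmono h le_rfl
      rw [hφN] at this; linarith
  set s := lamExt (n+2) θ lam with hs
  -- g k = - (backward sum)
  have hgF : ∀ k, k ≤ n+2 →
      (∑ a ∈ Icc (k+1) (n+2), s a * Real.sin (phiAng θ a - phiAng θ k))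
      = - ∑ a ∈ Icc 1 k, s a * Real.sin (phiAng θ a - phiAng θ k) := by
    intro k hk
    have hR := closureR n θ lam (ne_of_gt hsin) ht k
    rw [← hs] at hR
    have hsplit : (∑ a ∈ Icc 1 k, s a * Real.sin (phiAng θ a - phiAng θ k))
        + (∑ a ∈ Icc (k+1) (n+2), s a * Real.sin (phiAng θ a - phiAng θ k))
        = ∑ a ∈ Icc 1 (n+2), s a * Real.sin (phiAng θ a - phiAng θ k) := by
      rw [show Icc 1 k = Ioc 0 k from Finset.Icc_add_one_left_eq_Ioc 0 k,
        show Icc (k+1) (n+2) = Ioc k (n+2) from Finset.Icc_add_one_left_eq_Ioc k (n+2),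
        show Icc 1 (n+2) = Ioc 0 (n+2) from Finset.Icc_add_one_left_eq_Ioc 0 (n+2)]
      exact Finset.sum_Ioc_consecutive _ (Nat.zero_le k) hk
    rw [hR] at hsplit
    linarith
  -- nonnegativity of g
  have hg_nonneg : ∀ k, 1 ≤ k → k ≤ n+2 →
      0 ≤ ∑ a ∈ Icc (k+1) (n+2), s a * Real.sin (phiAng θ a - phiAng θ k) := by
    intro k h1 h2
    by_cases hall : ∀ x ∈ Icc (k+1) (n+2), 0 ≤ Real.sin (phiAng θ x - phiAng θ k)
    · apply Finset.sum_nonneg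
      intro x hx
      simp only [Finset.mem_Icc] at hx
      exact mul_nonneg (hpos x (by omega) hx.2)
        (hall x (by simp only [Finset.mem_Icc]; omega))
    · push_neg at hall
      obtain ⟨x0, hx0mem, hx0⟩ := hall
      simp only [Finset.mem_Icc] at hx0mem
      have hφk_lt : phiAng θ k < Real.pi := by
        have h1' : phiAng θ k < phiAng θ x0 := hmono (by omega) hx0mem.2
        have h2' : phiAng θ x0 ≤ 2 * Real.pi := hφle x0 hx0mem.2
        have h3' : Real.pi < phiAng θ x0 - phiAng θ k := by
          by_contra hcon
          push_neg at hcon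
          exact absurd (Real.sin_nonneg_of_nonneg_of_le_pi (by linarith) hcon)
            (not_le.mpr hx0)
        have h4' : 0 < phiAng θ k := hφpos k h1 h2
        linarith
      rw [hgF k h2, neg_nonneg]
      apply Finset.sum_nonpos
      intro x hx
      simp only [Finset.mem_Icc] at hx
      rcases eq_or_lt_of_le hx.2 with hxk | hxk
      · rw [hxk, sub_self, Real.sin_zero, mul_zero]
      · have hneg : Real.sin (phiAng θ x - phiAng θ k) < 0 := by
          apply Real.sin_neg_of_neg_of_neg_pi_lt
          · have := hmono hxk h2; linarith
          · have := hφpos x hx.1 (by omega); linarith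
        exact mul_nonpos_of_nonneg_of_nonpos (hpos x hx.1 (by omega)) (le_of_lt hneg)
  -- strict positivity of g at a middle support point
  have hg_strict : ∀ a c b : ℕ, 1 ≤ a → a < c → c < b → b ≤ n+2 →
      0 < s a → 0 < s b →
      0 < ∑ x ∈ Icc (c+1) (n+2), s x * Real.sin (phiAng θ x - phiAng θ c) := by
    intro a c b h1a hac hcb hbN hsa hsb
    by_cases hall : ∀ x ∈ Icc (c+1) (n+2), 0 ≤ Real.sin (phiAng θ x - phiAng θ c)
    · have hb_mem : b ∈ Icc (c+1) (n+2) := by simp only [Finset.mem_Icc]; omega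
      have hterm : 0 < s b * Real.sin (phiAng θ b - phiAng θ c) := by
        apply mul_pos hsb
        rcases lt_or_eq_of_le (hall b hb_mem) with h | h
        · exact h
        · exact absurd h.symm (hpar c b (by omega) hcb hbN)
      have hle : s b * Real.sin (phiAng θ b - phiAng θ c)
          ≤ ∑ x ∈ Icc (c+1) (n+2), s x * Real.sin (phiAng θ x - phiAng θ c) := by
        apply Finset.single_le_sum
          (f := fun x => s x * Real.sin (phiAng θ x - phiAng θ c)) _ hb_mem
        intro x hx
        simp only [Finset.mem_Icc] at hx
        exact mul_nonneg (hpos x (by omega) hx.2)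
          (hall x (by simp only [Finset.mem_Icc]; omega))
      linarith
    · push_neg at hall
      obtain ⟨x0, hx0mem, hx0⟩ := hall
      simp only [Finset.mem_Icc] at hx0mem
      have hφc_lt : phiAng θ c < Real.pi := by
        have h1' : phiAng θ c < phiAng θ x0 := hmono (by omega) hx0mem.2
        have h2' : phiAng θ x0 ≤ 2 * Real.pi := hφle x0 hx0mem.2
        have h3' : Real.pi < phiAng θ x0 - phiAng θ c := by
          by_contra hcon
          push_neg at hcon
          exact absurd (Real.sin_nonneg_of_nonneg_of_le_pi (by linarith) hcon)
            (not_le.mpr hx0)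
        have h4' : 0 < phiAng θ c := hφpos c (by omega) (by omega)
        linarith
      rw [hgF c (by omega)]
      have ha_mem : a ∈ Icc 1 c := by simp only [Finset.mem_Icc]; omega
      have hterm : s a * Real.sin (phiAng θ a - phiAng θ c) < 0 := by
        apply mul_neg_of_pos_of_neg hsa
        apply Real.sin_neg_of_neg_of_neg_pi_lt
        · have := hmono hac (by omega); linarith
        · have := hφpos a h1a (by omega); linarith
      have hsumle : (∑ x ∈ Icc 1 c, s x * Real.sin (phiAng θ x - phiAng θ c))
          ≤ s a * Real.sin (phiAng θ a - phiAng θ c) := by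
        have hneg : ∀ x ∈ Icc 1 c, 0 ≤ -(s x * Real.sin (phiAng θ x - phiAng θ c)) := by
          intro x hx
          simp only [Finset.mem_Icc] at hx
          rw [neg_nonneg]
          rcases eq_or_lt_of_le hx.2 with hxk | hxk
          · rw [hxk, sub_self, Real.sin_zero, mul_zero]
          · apply mul_nonpos_of_nonneg_of_nonpos (hpos x hx.1 (by omega))
            apply le_of_lt
            apply Real.sin_neg_of_neg_of_neg_pi_lt
            · have := hmono hxk (by omega); linarith
            · have := hφpos x hx.1 (by omega); linarith
        have h5 := Finset.single_le_sum
          (f := fun x => -(s x * Real.sin (phiAng θ x - phiAng θ c))) hneg ha_mem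
        rw [Finset.sum_neg_distrib] at h5
        have h5' : -(s a * Real.sin (phiAng θ a - phiAng θ c))
            ≤ -∑ x ∈ Icc 1 c, s x * Real.sin (phiAng θ x - phiAng θ c) := h5
        linarith
      linarith
  -- find support points
  have hex : ∃ k0, lam k0 ≠ 0 := by
    by_contra hcon
    push_neg at hcon
    exact hlam (funext fun k => hcon k)
  obtain ⟨k0, hk0⟩ := hex
  have hk0mem : k0 ∈ Icc 1 n := by
    by_contra hcon
    exact hk0 (hsupp k0 hcon)
  have hk0b : 1 ≤ k0 ∧ k0 ≤ n := by simpa using hk0mem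
  have hsk0 : 0 < s k0 := by
    have heq : s k0 = lam k0 := lamExt_mid n θ lam hk0mem
    have h0 : 0 ≤ s k0 := hpos k0 hk0b.1 (by omega)
    rcases lt_or_eq_of_le h0 with h | h
    · exact h
    · exact absurd (heq ▸ h.symm) hk0
  set K := (Icc 1 (n+2)).filter (fun k => 0 < s k) with hK
  have hKne : K.Nonempty :=
    ⟨k0, Finset.mem_filter.mpr ⟨by simp only [Finset.mem_Icc]; omega, hsk0⟩⟩
  set a := K.min' hKne with ha
  set b := K.max' hKne with hb
  have haK : a ∈ K := K.min'_mem hKne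
  have hbK : b ∈ K := K.max'_mem hKne
  have haIcc : 1 ≤ a ∧ a ≤ n+2 := by
    have := (Finset.mem_filter.mp haK).1; simpa using this
  have hbIcc : 1 ≤ b ∧ b ≤ n+2 := by
    have := (Finset.mem_filter.mp hbK).1; simpa using this
  have hsa : 0 < s a := (Finset.mem_filter.mp haK).2
  have hsb : 0 < s b := (Finset.mem_filter.mp hbK).2
  have hs0 : ∀ c ∈ Icc 1 (n+2), c ∉ K → s c = 0 := by
    intro c hc hcK
    simp only [Finset.mem_Icc] at hc
    have h0 : 0 ≤ s c := hpos c hc.1 hc.2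
    rcases lt_or_eq_of_le h0 with h | h
    · have hcmem : c ∈ Icc 1 (n+2) := by simp only [Finset.mem_Icc]; omega
      exact absurd (show c ∈ K from Finset.mem_filter.mpr ⟨hcmem, h⟩) hcK
    · exact h.symm
  have hab : a ≤ b := K.min'_le b hbK
  rcases eq_or_lt_of_le hab with haeb | haltb
  · -- single support point: contradiction via cos closure
    exfalso
    have hRc := closureRc n θ lam (ne_of_gt hsin) ht a
    rw [← hs] at hRc
    have heq : ∑ x ∈ Icc 1 (n+2), s x * Real.cos (phiAng θ x - phiAng θ a) = s a := by
      rw [Finset.sum_eq_single_of_mem a (by simp only [Finset.mem_Icc]; omega)]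
      · rw [sub_self, Real.cos_zero, mul_one]
      · intro c hc hca
        have hcK : c ∉ K := by
          intro hcK'
          have h1 : a ≤ c := K.min'_le c hcK'
          have h2 : c ≤ b := K.le_max' c hcK'
          rw [← haeb] at h2
          exact hca (le_antisymm h2 h1)
        rw [hs0 c hc hcK, zero_mul]
    rw [hRc] at heq
    exact absurd heq.symm (ne_of_gt hsa)
  · by_cases hmid : ∃ c ∈ K, a < c ∧ c < b
    · obtain ⟨c, hcK, hac, hcb⟩ := hmid
      have hsc : 0 < s c := (Finset.mem_filter.mp hcK).2
      have hgc : 0 < ∑ x ∈ Icc (c+1) (n+2), s x * Real.sin (phiAng θ x - phiAng θ c) :=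
        hg_strict a c b haIcc.1 hac hcb hbIcc.2 hsa hsb
      have hQ := Qeq n θ lam (ne_of_gt hsin) ht
      rw [← hs] at hQ
      rw [hQ]
      have hterm : 0 < s c * ∑ x ∈ Icc (c+1) (n+2), s x * Real.sin (phiAng θ x - phiAng θ c) :=
        mul_pos hsc hgc
      have hcIcc : c ∈ Icc 1 (n+2) := by simp only [Finset.mem_Icc]; omega
      have hle : s c * (∑ x ∈ Icc (c+1) (n+2), s x * Real.sin (phiAng θ x - phiAng θ c))
          ≤ ∑ j ∈ Icc 1 (n+2), s j *
            ∑ k ∈ Icc (j+1) (n+2), s k * Real.sin (phiAng θ k - phiAng θ j) := by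
        apply Finset.single_le_sum
          (f := fun j => s j * ∑ k ∈ Icc (j+1) (n+2), s k * Real.sin (phiAng θ k - phiAng θ j))
          _ hcIcc
        intro x hx
        simp only [Finset.mem_Icc] at hx
        exact mul_nonneg (hpos x hx.1 hx.2) (hg_nonneg x hx.1 hx.2)
      linarith
    · -- exactly two support points: contradiction via sin closure
      exfalso
      push_neg at hmid
      have hR := closureR n θ lam (ne_of_gt hsin) ht a
      rw [← hs] at hR
      have heq : ∑ x ∈ Icc 1 (n+2), s x * Real.sin (phiAng θ x - phiAng θ a)
          = s b * Real.sin (phiAng θ b - phiAng θ a) := by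
        rw [Finset.sum_eq_single_of_mem b (by simp only [Finset.mem_Icc]; omega)]
        intro c hc hcb
        by_cases hcK : c ∈ K
        · have h1 : a ≤ c := K.min'_le c hcK
          have h2 : c ≤ b := K.le_max' c hcK
          by_cases hca : c = a
          · rw [hca, sub_self, Real.sin_zero, mul_zero]
          · have hac : a < c := lt_of_le_of_ne h1 (Ne.symm hca)
            have hbc := hmid c hcK hac
            exact absurd (le_antisymm h2 hbc) hcb
        · rw [hs0 c hc hcK, zero_mul]
      rw [hR] at heq
      have hne := hpar a b haIcc.1 haltb hbIcc.2
      have hzero : s b = 0 := by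
        rcases mul_eq_zero.mp heq.symm with h | h
        · exact h
        · exact absurd h hne
      linarith
end AuxProof

/-- If no two sides of the polygon are parallel (`sin(φ_k - φ_j) ≠ 0` for all `j < k`),
then `Q` is strictly positive on `Δ̄ ∖ {0}`. -/

theorem stmt7 (N : ℕ) (hN : 5 ≤ N) (θ : ℕ → ℝ)
    (hθ : ∀ k, 1 ≤ k → k ≤ N → θ k ∈ Set.Ioo 0 Real.pi)
    (hsum : ∑ k ∈ Finset.Icc 1 N, θ k = 2 * Real.pi)
    (hpar : ∀ j k, 1 ≤ j → j < k → k ≤ N → Real.sin (phiAng θ k - phiAng θ j) ≠ 0) :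
    ∀ lam ∈ DeltaBar N θ, lam ≠ 0 → 0 < Qform N θ lam := by
  obtain ⟨n, rfl⟩ : ∃ n, N = n + 2 := ⟨N - 2, by omega⟩
  intro lam hmem hne
  obtain ⟨hsupp, hsign⟩ := hmem
  rcases hsign with hp | hm
  · exact keyPos n θ hθ hsum hpar lam hsupp hp hne
  · have h1 : suppOK (n+2) (-lam) := fun k hk => by
      simp only [Pi.neg_apply, hsupp k hk, neg_zero]
    have h2 : ∀ k, 1 ≤ k → k ≤ n+2 → 0 ≤ lamExt (n+2) θ (-lam) k := by
      intro k hk1 hk2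
      rw [lamExt_neg]
      linarith [hm k hk1 hk2]
    have h3 : (-lam : ℕ → ℝ) ≠ 0 := fun hc => hne (neg_eq_zero.mp hc)
    have h4 := keyPos n θ hθ hsum hpar (-lam) h1 h2 h3
    rwa [Qform_neg] at h4
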